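/- arXiv:1812.07863 — 4 statements merged into one kernel-verified Lean document; each statement's English description precedes it below -/
import Mathlib

section
/- Let N be a squarefree positive integer with N > 1, and let d = N·d₁ with gcd(d₁, N) = 1. Then the map v₁ ↦ N·(inverse of v₁ mod d₁ lifted appropriately) gives a bijection between the solutions of v₁² + N ≡ 0 (mod d₁) and the solutions of v² + N ≡ 0 (mod d). -/
lemma sq_zero_of_squarefree (N : ℕ) (hN : Squarefree N) (x : ZMod N) (h : x^2 = 0) : x = 0 := by
  haveI : NeZero N := ⟨hN.ne_zero⟩
  have h2 : (N : ℕ) ∣ x.val ^ 2 := by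
    have : ((x.val ^ 2 : ℕ) : ZMod N) = 0 := by push_cast [ZMod.natCast_val, ZMod.cast_id]; exact h
    exact (ZMod.natCast_eq_zero_iff _ N).mp this
  have hd := (hN.dvd_pow_iff_dvd (two_ne_zero)).mp h2
  have : ((x.val : ℕ) : ZMod N) = 0 := (ZMod.natCast_eq_zero_iff _ N).mpr hd
  rwa [ZMod.natCast_val, ZMod.cast_id] at this



/-- Let `N` be a squarefree positive integer with `N > 1`, and `d = N * d₁` with
`gcd(d₁, N) = 1`. Then there is a bijection between the solutions of
`v₁² + N ≡ 0 (mod d₁)` and the solutions of `v² + N ≡ 0 (mod N * d₁)`, given by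
`v₁ ↦ N · v₁⁻¹`, i.e. the image `v` satisfies `v · v₁ ≡ N (mod d₁)`. -/
theorem stmt_1 (N d₁ : ℕ) (hN : Squarefree N) (hN1 : 1 < N) (hd₁ : 0 < d₁)
    (hcop : Nat.Coprime d₁ N) :
    ∃ e : {v₁ : ZMod d₁ // v₁ ^ 2 + (N : ZMod d₁) = 0} ≃
          {v : ZMod (N * d₁) // v ^ 2 + (N : ZMod (N * d₁)) = 0},
      ∀ x, (ZMod.castHom (dvd_mul_left d₁ N) (ZMod d₁) (e x : ZMod (N * d₁))) * (x : ZMod d₁)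
        = (N : ZMod d₁) := by
  set c := ZMod.chineseRemainder (m := N) (n := d₁) hcop.symm with hc
  have hsnd : ∀ v : ZMod (N * d₁),
      (c v).2 = ZMod.castHom (dvd_mul_left d₁ N) (ZMod d₁) v := by
    intro v; simp [hc, ZMod.chineseRemainder, ZMod.castHom_apply]
  have hfst : ∀ v : ZMod (N * d₁),
      (c v).1 = ZMod.castHom (dvd_mul_right N d₁) (ZMod N) v := by
    intro v; simp [hc, ZMod.chineseRemainder, ZMod.castHom_apply]
  -- any solution v has first component 0
  have key : ∀ v : ZMod (N * d₁), v ^ 2 + (N : ZMod (N * d₁)) = 0 → (c v).1 = 0 := by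
    intro v hv
    apply sq_zero_of_squarefree N hN
    have : (c (v ^ 2 + (N : ZMod (N * d₁)))).1 = 0 := by rw [hv]; simp
    rw [map_add, map_pow] at this
    simpa using this
  refine ⟨{
    toFun := fun x => ⟨c.symm (0, -(x : ZMod d₁)), by
      have : c (c.symm (0, -(x : ZMod d₁)) ^ 2 + (N : ZMod (N * d₁))) = 0 := by
        rw [map_add, map_pow, RingEquiv.apply_symm_apply, map_natCast]
        ext <;> simp [x.2]
      have := congrArg c.symm this
      rwa [RingEquiv.symm_apply_apply, map_zero] at this⟩
    invFun := fun v => ⟨-(ZMod.castHom (dvd_mul_left d₁ N) (ZMod d₁) (v : ZMod (N * d₁))), by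
      rw [neg_sq]
      have := congrArg (ZMod.castHom (dvd_mul_left d₁ N) (ZMod d₁)) v.2
      rwa [map_add, map_natCast, map_zero, map_pow] at this⟩
    left_inv := fun x => by
      ext
      simp only
      rw [← hsnd, RingEquiv.apply_symm_apply]
      simp
    right_inv := fun v => by
      ext
      simp only
      rw [← hsnd, neg_neg]
      have : c (v : ZMod (N * d₁)) = (0, (c (v : ZMod (N*d₁))).2) := by
        ext
        · exact key _ v.2
        · rfl
      rw [← this, RingEquiv.symm_apply_apply] }, ?_⟩
  intro x
  simp only [Equiv.coe_fn_mk]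
  rw [← hsnd, RingEquiv.apply_symm_apply]
  simp only
  linear_combination -x.2
end

section
/- Let N ∈ {1, 2, 67, 163} and let d be a positive integer. For each solution v of v² + N ≡ 0 (mod d), there exist coprime integers a_v, q_v with q_v > 0, c₁·d^{1/2} ≤ q_v ≤ c₂·d^{1/2} for constants c₁, c₂ > 0 depending only on N, such that |v/d − a_v/q_v| ≤ 1/q_v². -/
set_option maxHeartbeats 800000


/-- For `N ∈ {1, 2, 67, 163}` there are constants `c₁, c₂ > 0` depending only on `N`
such that for every positive integer `d` and every solution `v` of
`v² + N ≡ 0 (mod d)` there is a fraction `a/q` with `gcd(a, q) = 1`,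
`c₁ √d ≤ q ≤ c₂ √d` and `|v/d - a/q| ≤ 1/q²`. -/
theorem stmt_6 (N : ℕ) (hN : N ∈ ({1, 2, 67, 163} : Set ℕ)) :
    ∃ c₁ c₂ : ℝ, 0 < c₁ ∧ 0 < c₂ ∧
      ∀ d : ℕ, 0 < d → ∀ v : ℤ, 0 ≤ v → v < d → (d : ℤ) ∣ v ^ 2 + N →
        ∃ a q : ℤ, IsCoprime a q ∧ 0 < q ∧
          c₁ * Real.sqrt d ≤ q ∧ (q : ℝ) ≤ c₂ * Real.sqrt d ∧
          |(v : ℝ) / d - (a : ℝ) / q| ≤ 1 / (q : ℝ) ^ 2 := by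
  have hN1 : 1 ≤ N := by
    rcases hN with h | h | h | h <;> simp_all
  have hNR : (1 : ℝ) ≤ N := by exact_mod_cast hN1
  have h2N : (0 : ℝ) < Real.sqrt (2 * N) := Real.sqrt_pos.mpr (by positivity)
  refine ⟨(Real.sqrt (2 * N))⁻¹, Real.sqrt 2, by positivity,
    Real.sqrt_pos.mpr two_pos, ?_⟩
  intro d hd v hv0 hvd hdvd
  have hdR : (1 : ℝ) ≤ d := by exact_mod_cast hd
  have hdR0 : (0 : ℝ) < d := by linarith
  -- choose n with sqrt(2d) ≤ n+1 and n ≤ sqrt(2d)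
  set s : ℝ := Real.sqrt (2 * d) with hs_def
  have hs0 : 0 < s := Real.sqrt_pos.mpr (by positivity)
  have hs2 : s ^ 2 = 2 * d := Real.sq_sqrt (by positivity)
  have hs1 : 1 < s := by nlinarith
  set n : ℕ := ⌈s⌉₊ - 1 with hn_def
  have hceil2 : 2 ≤ ⌈s⌉₊ := by
    have : (1 : ℕ) < ⌈s⌉₊ := Nat.lt_ceil.mpr (by exact_mod_cast hs1)
    omega
  have hn : 0 < n := by omega
  have hn1 : s ≤ (n : ℝ) + 1 := by
    have h1 : (n : ℝ) + 1 = (⌈s⌉₊ : ℝ) := by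
      have : n + 1 = ⌈s⌉₊ := by omega
      exact_mod_cast congrArg (Nat.cast (R := ℝ)) this
    rw [h1]; exact Nat.le_ceil s
  have hnle : (n : ℝ) ≤ s := by
    have h1 : (⌈s⌉₊ : ℝ) < s + 1 := Nat.ceil_lt_add_one hs0.le
    have h2 : (n : ℝ) + 1 = (⌈s⌉₊ : ℝ) := by
      have : n + 1 = ⌈s⌉₊ := by omega
      exact_mod_cast congrArg (Nat.cast (R := ℝ)) this
    linarith
  obtain ⟨j, k, hk0, hkn, happ⟩ :=
    Real.exists_int_int_abs_mul_sub_le ((v : ℝ) / d) hn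
  -- make it coprime
  set g : ℕ := Int.gcd j k with hg_def
  have hg0 : 0 < g := Int.gcd_pos_of_ne_zero_right j hk0.ne'
  set a : ℤ := j / g with ha_def
  set q : ℤ := k / g with hq_def
  have hgj : (g : ℤ) ∣ j := Int.gcd_dvd_left j k
  have hgk : (g : ℤ) ∣ k := Int.gcd_dvd_right j k
  have hja : j = g * a := (Int.ediv_mul_cancel hgj).symm.trans (mul_comm _ _)
  have hkq : k = g * q := (Int.ediv_mul_cancel hgk).symm.trans (mul_comm _ _)
  have hq0 : 0 < q := by
    rcases lt_trichotomy q 0 with h | h | h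
    · nlinarith [hk0, hkq, (Int.natCast_pos.mpr hg0)]
    · rw [hkq, h, mul_zero] at hk0; exact absurd hk0 (lt_irrefl 0)
    · exact h
  have hcop : IsCoprime a q := by
    rw [Int.isCoprime_iff_gcd_eq_one]
    exact Int.gcd_div_gcd_div_gcd hg0
  have hqk : q ≤ k := by
    have : q ∣ k := ⟨g, by rw [hkq]; ring⟩
    exact Int.le_of_dvd hk0 this
  have hqR : (0 : ℝ) < q := by exact_mod_cast hq0
  -- r = qv - ad
  set r : ℤ := q * v - a * d with hr_def
  have hkvjd : (k : ℤ) * v - j * d = g * r := by rw [hja, hkq, hr_def]; ring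
  -- |r| ≤ d/(n+1)
  have habs : |(r : ℝ)| ≤ d / (n + 1) := by
    have h1 : |(k : ℝ) * ((v : ℝ) / d) - j| * d ≤ (1 / (n + 1)) * d :=
      mul_le_mul_of_nonneg_right happ hdR0.le
    have h2 : |(k : ℝ) * ((v : ℝ) / d) - j| * d = |(k : ℝ) * v - j * d| := by
      rw [← abs_of_pos hdR0, ← abs_mul]
      congr 1
      field_simp
      rw [abs_of_pos hdR0]; ring
    have h3 : |(k : ℝ) * v - j * d| = (g : ℝ) * |(r : ℝ)| := by
      have : ((k : ℤ) * v - j * d : ℤ) = ((g : ℤ) * r : ℤ) := hkvjd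
      have h4 : ((k : ℝ) * v - j * d) = (g : ℝ) * r := by exact_mod_cast this
      rw [h4, abs_mul, abs_of_nonneg (by positivity : (0:ℝ) ≤ (g:ℝ))]
    have hg1 : (1 : ℝ) ≤ g := by exact_mod_cast hg0
    have h5 : |(r : ℝ)| ≤ (g : ℝ) * |(r : ℝ)| := by nlinarith [abs_nonneg ((r : ℝ))]
    calc |(r : ℝ)| ≤ (g : ℝ) * |(r : ℝ)| := h5
      _ = |(k : ℝ) * ((v : ℝ) / d) - j| * d := by rw [h2, h3]
      _ ≤ (1 / (n + 1)) * d := h1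
      _ = d / (n + 1) := by ring
  -- d ∣ r² + N q²
  obtain ⟨e, he⟩ := hdvd
  have hdvd' : (d : ℤ) ∣ r ^ 2 + N * q ^ 2 := by
    refine ⟨q ^ 2 * e - 2 * q * v * a + a ^ 2 * d, ?_⟩
    rw [hr_def]
    linear_combination q ^ 2 * he
  have hpos : 0 < r ^ 2 + (N : ℤ) * q ^ 2 := by positivity
  have hge : (d : ℤ) ≤ r ^ 2 + N * q ^ 2 := Int.le_of_dvd hpos hdvd'
  have hgeR : (d : ℝ) ≤ (r : ℝ) ^ 2 + N * (q : ℝ) ^ 2 := by exact_mod_cast hge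
  -- r² ≤ d/2
  have hnpos : (0 : ℝ) < (n : ℝ) + 1 := by positivity
  have hr2 : (r : ℝ) ^ 2 ≤ d / 2 := by
    have habs2 : |(r : ℝ)| ≤ d / s :=
      habs.trans (div_le_div_of_nonneg_left hdR0.le hs0 hn1)
    have h1 : (r : ℝ) ^ 2 ≤ (d / s) ^ 2 := by
      nlinarith [abs_nonneg (r : ℝ), sq_abs (r : ℝ)]
    have h3 : ((d : ℝ) / s) ^ 2 = d / 2 := by
      rw [div_pow, hs2, div_eq_div_iff (by positivity) (by positivity)]
      ring
    linarith
  -- N q² ≥ d/2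
  have hq2 : (d : ℝ) / 2 ≤ (N : ℝ) * (q : ℝ) ^ 2 := by linarith
  refine ⟨a, q, hcop, hq0, ?_, ?_, ?_⟩
  · -- lower bound
    rw [inv_mul_le_iff₀ h2N]
    have h1 : Real.sqrt d ≤ Real.sqrt (2 * N * q ^ 2) := by
      apply Real.sqrt_le_sqrt
      nlinarith
    have h2 : Real.sqrt (2 * N * q ^ 2) = Real.sqrt (2 * N) * q := by
      rw [Real.sqrt_mul (by positivity), Real.sqrt_sq hqR.le]
    linarith
  · -- upper bound
    have h1 : (q : ℝ) ≤ k := by exact_mod_cast hqk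
    have h2 : (k : ℝ) ≤ n := by exact_mod_cast hkn
    have h3 : s = Real.sqrt 2 * Real.sqrt d := by
      rw [hs_def, Real.sqrt_mul (by norm_num)]
    linarith
  · -- approximation
    have heq : (v : ℝ) / d - (a : ℝ) / q = (r : ℝ) / (d * q) := by
      rw [hr_def]
      push_cast
      field_simp
    rw [heq, abs_div, abs_of_pos (by positivity : (0:ℝ) < (d : ℝ) * q)]
    rw [div_le_div_iff₀ (by positivity) (by positivity)]
    have hqn : (q : ℝ) ≤ (n : ℝ) + 1 := by
      have h1 : (q : ℝ) ≤ k := by exact_mod_cast hqk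
      have h2 : (k : ℝ) ≤ n := by exact_mod_cast hkn
      linarith
    have key : |(r : ℝ)| * q ≤ d := by
      calc |(r : ℝ)| * q ≤ (d / (n + 1)) * (n + 1) := by
            apply mul_le_mul habs hqn hqR.le (by positivity)
        _ = d := by field_simp
    nlinarith [mul_le_mul_of_nonneg_right key hqR.le]
end

section
/- Let N be a positive integer, p an odd prime with p ∤ 2N, and α ≥ 1. Let ρ_{0,N}(p) be the number of x mod p with x² + N ≡ 0 (mod p), and ρ_N(p^α) the number of pairs (u,v) mod p^α with u² + Nv² ≡ 0 (mod p^α). Then ρ_N(p^α) = (α/2)·φ(p^α)·ρ_{0,N}(p) + p^α if α is even, and ρ_N(p^α) = ((α+1)/2)·φ(p^α)·ρ_{0,N}(p) + p^{α−1} if α is odd. -/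
/-- `ρ_N(d)`: number of pairs `(u, v)` with `0 < u, v ≤ d`, `d ∣ u² + N v²`. -/
def rhoN (N d : ℕ) : ℕ :=
  ((Finset.Icc 1 d ×ˢ Finset.Icc 1 d).filter (fun p => d ∣ p.1 ^ 2 + N * p.2 ^ 2)).card

/-- `ρ_{0,N}(d)`: number of residues `x (mod d)` with `d ∣ x² + N`. -/
def rhoZeroN (N d : ℕ) : ℕ :=
  ((Finset.range d).filter (fun x => d ∣ x ^ 2 + N)).card

open Finset

def cntPairs (N q : ℕ) : ℕ :=
  ((Finset.range q ×ˢ Finset.range q).filter (fun z => q ∣ z.1 ^ 2 + N * z.2 ^ 2)).card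

lemma dvd_shift (N q u v : ℕ) : q ∣ (u % q) ^ 2 + N * (v % q) ^ 2 ↔ q ∣ u ^ 2 + N * v ^ 2 := by
  have h : (u % q) ^ 2 + N * (v % q) ^ 2 ≡ u ^ 2 + N * v ^ 2 [MOD q] :=
    ((Nat.mod_modEq u q).pow 2).add ((Nat.ModEq.refl N).mul ((Nat.mod_modEq v q).pow 2))
  constructor
  · intro hd
    exact (Nat.modEq_zero_iff_dvd).1 (h.symm.trans ((Nat.modEq_zero_iff_dvd).2 hd))
  · intro hd
    exact (Nat.modEq_zero_iff_dvd).1 (h.trans ((Nat.modEq_zero_iff_dvd).2 hd))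

lemma rhoN_eq_cntPairs (N q : ℕ) (hq : 0 < q) : rhoN N q = cntPairs N q := by
  unfold rhoN cntPairs
  apply Finset.card_nbij' (i := fun z => (z.1 % q, z.2 % q))
    (j := fun z => (if z.1 = 0 then q else z.1, if z.2 = 0 then q else z.2))
  · intro z hz
    simp only [Finset.mem_coe, mem_filter, mem_product, mem_Icc] at hz ⊢
    simp only [mem_range]
    refine ⟨⟨Nat.mod_lt _ hq, Nat.mod_lt _ hq⟩, ?_⟩
    exact (dvd_shift N q z.1 z.2).2 hz.2
  · intro z hz
    simp only [Finset.mem_coe, mem_filter, mem_product, mem_range] at hz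
    simp only [Finset.mem_coe, mem_filter, mem_product, mem_Icc]
    obtain ⟨⟨h1, h2⟩, hd⟩ := hz
    constructor
    · constructor <;> split <;> omega
    · have e1 : (if z.1 = 0 then q else z.1) % q = z.1 % q := by
        split
        · simp [Nat.mod_self, *]
        · rfl
      have e2 : (if z.2 = 0 then q else z.2) % q = z.2 % q := by
        split
        · simp [Nat.mod_self, *]
        · rfl
      rw [← dvd_shift, e1, e2, dvd_shift]
      exact hd
  · intro z hz
    simp only [Finset.mem_coe, mem_filter, mem_product, mem_Icc] at hz
    obtain ⟨⟨⟨h1, h2⟩, ⟨h3, h4⟩⟩, _⟩ := hz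
    have : ∀ x : ℕ, 1 ≤ x → x ≤ q → (if x % q = 0 then q else x % q) = x := by
      intro x hx1 hx2
      rcases eq_or_lt_of_le hx2 with rfl | hlt
      · simp [Nat.mod_self]
      · rw [Nat.mod_eq_of_lt hlt]; simp; omega
    exact Prod.ext (this z.1 h1 h2) (this z.2 h3 h4)
  · intro z hz
    simp only [Finset.mem_coe, mem_filter, mem_product, mem_range] at hz
    obtain ⟨⟨h1, h2⟩, _⟩ := hz
    have : ∀ x : ℕ, x < q → (if x = 0 then q else x) % q = x := by
      intro x hx
      split
      · simp [Nat.mod_self, *]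
      · exact Nat.mod_eq_of_lt hx
    exact Prod.ext (this z.1 h1) (this z.2 h2)

lemma cntPairs_one (N : ℕ) : cntPairs N 1 = 1 := by
  unfold cntPairs
  simp

-- card of multiples of p in range (p*k)
lemma card_multiples_range (p k : ℕ) (hp : 0 < p) :
    ((range (p * k)).filter (fun v => p ∣ v)).card = k := by
  have : ((range (p * k)).filter (fun v => p ∣ v)).card = (range k).card := by
    apply Finset.card_nbij' (i := fun v => v / p) (j := fun t => p * t)
    · intro v hv
      simp only [Finset.mem_coe, mem_filter, mem_range] at hv
      obtain ⟨hlt, c, rfl⟩ := hv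
      simp only [Finset.mem_coe, mem_range]
      rw [Nat.mul_div_cancel_left _ hp]
      exact lt_of_mul_lt_mul_left hlt (Nat.zero_le p)
    · intro t ht
      simp only [Finset.mem_coe, mem_range] at ht
      simp only [Finset.mem_coe, mem_filter, mem_range]
      exact ⟨(Nat.mul_lt_mul_left hp).2 ht, Dvd.intro t rfl⟩
    · intro v hv
      simp only [Finset.mem_coe, mem_filter, mem_range] at hv
      obtain ⟨hlt, c, rfl⟩ := hv
      dsimp only; rw [Nat.mul_div_cancel_left _ hp]
    · intro t ht
      dsimp only; rw [Nat.mul_div_cancel_left _ hp]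
  rw [this, Finset.card_range]

lemma card_nonmultiples (p k : ℕ) (hp : 0 < p) :
    ((range (p * k)).filter (fun v => ¬ p ∣ v)).card = p * k - k := by
  have h := Finset.card_filter_add_card_filter_not
    (s := range (p * k)) (p := fun v => p ∣ v)
  rw [card_multiples_range p k hp, Finset.card_range] at h
  omega

-- periodicity: counting pairs mod m inside range (m*k)
lemma card_pairs_period (N m k : ℕ) (hm : 0 < m) :
    ((range (m * k) ×ˢ range (m * k)).filter (fun z => m ∣ z.1 ^ 2 + N * z.2 ^ 2)).card
      = ((range m ×ˢ range m).filter (fun z => m ∣ z.1 ^ 2 + N * z.2 ^ 2)).card * k ^ 2 := by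
  have key : ((range m ×ˢ range m).filter (fun z => m ∣ z.1 ^ 2 + N * z.2 ^ 2)).card * k ^ 2
      = (((range m ×ˢ range m).filter (fun z => m ∣ z.1 ^ 2 + N * z.2 ^ 2))
          ×ˢ (range k ×ˢ range k)).card := by
    rw [Finset.card_product, Finset.card_product, Finset.card_range]
    ring
  rw [key]
  apply Finset.card_nbij' (i := fun z => ((z.1 % m, z.2 % m), (z.1 / m, z.2 / m)))
    (j := fun w => (w.1.1 + m * w.2.1, w.1.2 + m * w.2.2))
  · intro z hz
    simp only [Finset.mem_coe, mem_filter, mem_product, mem_range] at hz ⊢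
    obtain ⟨⟨h1, h2⟩, hd⟩ := hz
    refine ⟨⟨⟨Nat.mod_lt _ hm, Nat.mod_lt _ hm⟩, ?_⟩, ?_, ?_⟩
    · exact (dvd_shift N m z.1 z.2).2 hd
    · exact Nat.div_lt_of_lt_mul (by simpa [mul_comm] using h1)
    · exact Nat.div_lt_of_lt_mul (by simpa [mul_comm] using h2)
  · intro w hw
    simp only [Finset.mem_coe, mem_filter, mem_product, mem_range] at hw ⊢
    obtain ⟨⟨⟨h1, h2⟩, hd⟩, h3, h4⟩ := hw
    have b1 : w.1.1 + m * w.2.1 < m * k := by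
      calc w.1.1 + m * w.2.1 < m + m * w.2.1 := by omega
        _ = m * (w.2.1 + 1) := by ring
        _ ≤ m * k := Nat.mul_le_mul_left m (by omega)
    have b2 : w.1.2 + m * w.2.2 < m * k := by
      calc w.1.2 + m * w.2.2 < m + m * w.2.2 := by omega
        _ = m * (w.2.2 + 1) := by ring
        _ ≤ m * k := Nat.mul_le_mul_left m (by omega)
    refine ⟨⟨b1, b2⟩, ?_⟩
    have e1 : (w.1.1 + m * w.2.1) % m = w.1.1 := by
      rw [Nat.add_mul_mod_self_left, Nat.mod_eq_of_lt h1]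
    have e2 : (w.1.2 + m * w.2.2) % m = w.1.2 := by
      rw [Nat.add_mul_mod_self_left, Nat.mod_eq_of_lt h2]
    rw [← dvd_shift, e1, e2]
    exact hd
  · intro z hz
    simp only [Finset.mem_coe, mem_filter, mem_product, mem_range] at hz
    have e1 : z.1 % m + m * (z.1 / m) = z.1 := Nat.mod_add_div z.1 m
    have e2 : z.2 % m + m * (z.2 / m) = z.2 := Nat.mod_add_div z.2 m
    exact Prod.ext e1 e2
  · intro w hw
    simp only [Finset.mem_coe, mem_filter, mem_product, mem_range] at hw
    obtain ⟨⟨⟨h1, h2⟩, hd⟩, h3, h4⟩ := hw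
    have e1 : (w.1.1 + m * w.2.1) % m = w.1.1 := by
      rw [Nat.add_mul_mod_self_left, Nat.mod_eq_of_lt h1]
    have e2 : (w.1.2 + m * w.2.2) % m = w.1.2 := by
      rw [Nat.add_mul_mod_self_left, Nat.mod_eq_of_lt h2]
    have f1 : (w.1.1 + m * w.2.1) / m = w.2.1 := by
      rw [Nat.add_mul_div_left _ _ hm, Nat.div_eq_of_lt h1, zero_add]
    have f2 : (w.1.2 + m * w.2.2) / m = w.2.2 := by
      rw [Nat.add_mul_div_left _ _ hm, Nat.div_eq_of_lt h2, zero_add]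
    exact Prod.ext (Prod.ext e1 e2) (Prod.ext f1 f2)
lemma dvd_shift1 (N q x : ℕ) : q ∣ (x % q) ^ 2 + N ↔ q ∣ x ^ 2 + N := by
  have h : (x % q) ^ 2 + N ≡ x ^ 2 + N [MOD q] :=
    ((Nat.mod_modEq x q).pow 2).add_right N
  constructor
  · intro hd
    exact (Nat.modEq_zero_iff_dvd).1 (h.symm.trans ((Nat.modEq_zero_iff_dvd).2 hd))
  · intro hd
    exact (Nat.modEq_zero_iff_dvd).1 (h.trans ((Nat.modEq_zero_iff_dvd).2 hd))

lemma unit_part (N p α : ℕ) (hp : p.Prime) (hα : 1 ≤ α) :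
    ((range (p ^ α) ×ˢ range (p ^ α)).filter
        (fun z => p ^ α ∣ z.1 ^ 2 + N * z.2 ^ 2 ∧ ¬ p ∣ z.2)).card
      = ((range (p ^ α)).filter (fun x => p ^ α ∣ x ^ 2 + N)).card
        * ((range (p ^ α)).filter (fun v => ¬ p ∣ v)).card := by
  set q := p ^ α with hq
  haveI : NeZero q := ⟨(pow_pos hp.pos α).ne'⟩
  have hq0 : 0 < q := pow_pos hp.pos α
  rw [← Finset.card_product]
  symm
  apply Finset.card_nbij' (i := fun z => ((z.1 * z.2) % q, z.2))
    (j := fun (z : ℕ × ℕ) => ((z.1 * ((((z.2 : ℕ) : ZMod q))⁻¹).val) % q, z.2))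
  · -- i maps into
    rintro ⟨x, v⟩ hz
    simp only [Finset.mem_coe, mem_filter, mem_product, mem_range] at hz ⊢
    obtain ⟨⟨hx, hdx⟩, hv, hvp⟩ := hz
    refine ⟨⟨Nat.mod_lt _ hq0, hv⟩, ?_, hvp⟩
    have h1 : ((x * v) % q) ^ 2 + N * v ^ 2 ≡ (x * v) ^ 2 + N * v ^ 2 [MOD q] :=
      ((Nat.mod_modEq _ q).pow 2).add_right _
    have h2 : q ∣ (x * v) ^ 2 + N * v ^ 2 := by
      have : (x * v) ^ 2 + N * v ^ 2 = v ^ 2 * (x ^ 2 + N) := by ring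
      rw [this]
      exact Dvd.dvd.mul_left hdx _
    exact (Nat.modEq_zero_iff_dvd).1 (h1.trans ((Nat.modEq_zero_iff_dvd).2 h2))
  · -- j maps into
    rintro ⟨u, v⟩ hz
    simp only [Finset.mem_coe, mem_filter, mem_product, mem_range] at hz ⊢
    obtain ⟨⟨hu, hv⟩, hd, hvp⟩ := hz
    have hcopv : Nat.Coprime v q := (((hp.coprime_iff_not_dvd).2 hvp).symm).pow_right α
    set w := ((v : ZMod q)⁻¹).val with hw
    have hunit : IsUnit (v : ZMod q) := (ZMod.isUnit_iff_coprime v q).2 hcopv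
    have hvw : v * w ≡ 1 [MOD q] := by
      have : ((v * w : ℕ) : ZMod q) = ((1 : ℕ) : ZMod q) := by
        push_cast
        rw [hw, ZMod.natCast_val, ZMod.cast_id]
        simp [ZMod.mul_inv_of_unit _ hunit]
      exact (ZMod.natCast_eq_natCast_iff _ _ _).1 this
    refine ⟨⟨Nat.mod_lt _ hq0, ?_⟩, hv, hvp⟩
    rw [dvd_shift1]
    have key : v ^ 2 * ((u * w) ^ 2 + N) ≡ u ^ 2 + N * v ^ 2 [MOD q] := by
      have e : v ^ 2 * ((u * w) ^ 2 + N) = (v * w) ^ 2 * u ^ 2 + N * v ^ 2 := by ring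
      rw [e]
      calc (v * w) ^ 2 * u ^ 2 + N * v ^ 2
          ≡ 1 ^ 2 * u ^ 2 + N * v ^ 2 [MOD q] := ((hvw.pow 2).mul_right _).add_right _
        _ = u ^ 2 + N * v ^ 2 := by ring
    have hdvd : q ∣ v ^ 2 * ((u * w) ^ 2 + N) :=
      (Nat.modEq_zero_iff_dvd).1 (key.trans ((Nat.modEq_zero_iff_dvd).2 hd))
    have hcop2 : Nat.Coprime q (v ^ 2) := (hcopv.symm.pow_right 2)
    exact hcop2.dvd_of_dvd_mul_left hdvd
  · -- left inverse
    rintro ⟨x, v⟩ hz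
    simp only [Finset.mem_coe, mem_filter, mem_product, mem_range] at hz
    obtain ⟨⟨hx, hdx⟩, hv, hvp⟩ := hz
    have hcopv : Nat.Coprime v q := (((hp.coprime_iff_not_dvd).2 hvp).symm).pow_right α
    set w := ((v : ZMod q)⁻¹).val with hw
    have hunit : IsUnit (v : ZMod q) := (ZMod.isUnit_iff_coprime v q).2 hcopv
    have hvw : v * w ≡ 1 [MOD q] := by
      have : ((v * w : ℕ) : ZMod q) = ((1 : ℕ) : ZMod q) := by
        push_cast
        rw [hw, ZMod.natCast_val, ZMod.cast_id]
        simp [ZMod.mul_inv_of_unit _ hunit]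
      exact (ZMod.natCast_eq_natCast_iff _ _ _).1 this
    simp only [Prod.mk.injEq]
    refine ⟨?_, trivial⟩
    have h1 : ((x * v) % q) * w ≡ x [MOD q] := by
      calc ((x * v) % q) * w ≡ (x * v) * w [MOD q] := (Nat.mod_modEq _ q).mul_right _
        _ = x * (v * w) := by ring
        _ ≡ x * 1 [MOD q] := hvw.mul_left _
        _ = x := by ring
    exact (((Nat.mod_modEq _ q).trans h1).eq_of_lt_of_lt (Nat.mod_lt _ hq0) hx)
  · -- right inverse
    rintro ⟨u, v⟩ hz
    simp only [Finset.mem_coe, mem_filter, mem_product, mem_range] at hz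
    obtain ⟨⟨hu, hv⟩, hd, hvp⟩ := hz
    have hcopv : Nat.Coprime v q := (((hp.coprime_iff_not_dvd).2 hvp).symm).pow_right α
    set w := ((v : ZMod q)⁻¹).val with hw
    have hunit : IsUnit (v : ZMod q) := (ZMod.isUnit_iff_coprime v q).2 hcopv
    have hvw : v * w ≡ 1 [MOD q] := by
      have : ((v * w : ℕ) : ZMod q) = ((1 : ℕ) : ZMod q) := by
        push_cast
        rw [hw, ZMod.natCast_val, ZMod.cast_id]
        simp [ZMod.mul_inv_of_unit _ hunit]
      exact (ZMod.natCast_eq_natCast_iff _ _ _).1 this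
    simp only [Prod.mk.injEq]
    refine ⟨?_, trivial⟩
    have h1 : ((u * w) % q) * v ≡ u [MOD q] := by
      calc ((u * w) % q) * v ≡ (u * w) * v [MOD q] := (Nat.mod_modEq _ q).mul_right _
        _ = u * (v * w) := by ring
        _ ≡ u * 1 [MOD q] := hvw.mul_left _
        _ = u := by ring
    exact (((Nat.mod_modEq _ q).trans h1).eq_of_lt_of_lt (Nat.mod_lt _ hq0) hu)

lemma split_lemma (N p α : ℕ) (hp : p.Prime) (hα : 1 ≤ α) :
    cntPairs N (p ^ α)
      = ((range (p ^ α)).filter (fun x => p ^ α ∣ x ^ 2 + N)).card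
          * ((range (p ^ α)).filter (fun v => ¬ p ∣ v)).card
        + ((range (p ^ α) ×ˢ range (p ^ α)).filter
            (fun z => p ^ α ∣ z.1 ^ 2 + N * z.2 ^ 2 ∧ p ∣ z.2)).card := by
  have h := Finset.card_filter_add_card_filter_not
    (s := (range (p ^ α) ×ˢ range (p ^ α)).filter (fun z => p ^ α ∣ z.1 ^ 2 + N * z.2 ^ 2))
    (p := fun z => p ∣ z.2)
  rw [Finset.filter_filter, Finset.filter_filter] at h
  rw [← unit_part N p α hp hα] at *
  unfold cntPairs
  omega
lemma nonunit_part (N p β : ℕ) (hp : p.Prime) :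
    ((range (p ^ (β + 2)) ×ˢ range (p ^ (β + 2))).filter
        (fun z => p ^ (β + 2) ∣ z.1 ^ 2 + N * z.2 ^ 2 ∧ p ∣ z.2)).card
      = cntPairs N (p ^ β) * p ^ 2 := by
  have hp0 : 0 < p := hp.pos
  have key : ((range (p ^ (β + 1)) ×ˢ range (p ^ (β + 1))).filter
      (fun z => p ^ β ∣ z.1 ^ 2 + N * z.2 ^ 2)).card = cntPairs N (p ^ β) * p ^ 2 := by
    have h := card_pairs_period N (p ^ β) p (pow_pos hp0 β)
    rw [← pow_succ] at h
    unfold cntPairs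
    rw [h]
  rw [← key]
  symm
  apply Finset.card_nbij' (i := fun (z : ℕ × ℕ) => (p * z.1, p * z.2))
    (j := fun (z : ℕ × ℕ) => (z.1 / p, z.2 / p))
  · rintro ⟨a, b⟩ hz
    simp only [Finset.mem_coe, mem_filter, mem_product, mem_range] at hz ⊢
    obtain ⟨⟨ha, hb⟩, hd⟩ := hz
    have hpow : p ^ (β + 2) = p * p ^ (β + 1) := by ring
    refine ⟨⟨?_, ?_⟩, ?_, Dvd.intro b rfl⟩
    · rw [hpow]; exact (Nat.mul_lt_mul_left hp0).2 ha
    · rw [hpow]; exact (Nat.mul_lt_mul_left hp0).2 hb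
    · have e : (p * a) ^ 2 + N * (p * b) ^ 2 = p ^ 2 * (a ^ 2 + N * b ^ 2) := by ring
      have e2 : p ^ (β + 2) = p ^ 2 * p ^ β := by ring
      rw [e, e2]
      exact mul_dvd_mul_left _ hd
  · rintro ⟨u, v⟩ hz
    simp only [Finset.mem_coe, mem_filter, mem_product, mem_range] at hz ⊢
    obtain ⟨⟨hu, hv⟩, hd, hpv⟩ := hz
    have hpdq : p ∣ p ^ (β + 2) := dvd_pow_self p (by omega)
    have hpu : p ∣ u := by
      have h1 : p ∣ u ^ 2 + N * v ^ 2 := hpdq.trans hd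
      have h2 : p ∣ N * v ^ 2 := Dvd.dvd.mul_left (hpv.pow (by omega)) N
      have h3 : p ∣ u ^ 2 := (Nat.dvd_sub h1 h2).trans (by rw [Nat.add_sub_cancel])
      exact hp.dvd_of_dvd_pow h3
    obtain ⟨a, rfl⟩ := hpu
    obtain ⟨b, rfl⟩ := hpv
    rw [Nat.mul_div_cancel_left _ hp0, Nat.mul_div_cancel_left _ hp0]
    have hpow : p ^ (β + 2) = p * p ^ (β + 1) := by ring
    rw [hpow] at hu hv
    refine ⟨⟨(Nat.mul_lt_mul_left hp0).1 hu, (Nat.mul_lt_mul_left hp0).1 hv⟩, ?_⟩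
    have e : (p * a) ^ 2 + N * (p * b) ^ 2 = p ^ 2 * (a ^ 2 + N * b ^ 2) := by ring
    have e2 : p ^ (β + 2) = p ^ 2 * p ^ β := by ring
    rw [e, e2] at hd
    exact (mul_dvd_mul_iff_left (by positivity : (p:ℕ) ^ 2 ≠ 0)).1 hd
  · rintro ⟨a, b⟩ hz
    simp only [Prod.mk.injEq]
    exact ⟨Nat.mul_div_cancel_left _ hp0, Nat.mul_div_cancel_left _ hp0⟩
  · rintro ⟨u, v⟩ hz
    simp only [Finset.mem_coe, mem_filter, mem_product, mem_range] at hz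
    obtain ⟨⟨hu, hv⟩, hd, hpv⟩ := hz
    have hpdq : p ∣ p ^ (β + 2) := dvd_pow_self p (by omega)
    have hpu : p ∣ u := by
      have h1 : p ∣ u ^ 2 + N * v ^ 2 := hpdq.trans hd
      have h2 : p ∣ N * v ^ 2 := Dvd.dvd.mul_left (hpv.pow (by omega)) N
      have h3 : p ∣ u ^ 2 := (Nat.dvd_sub h1 h2).trans (by rw [Nat.add_sub_cancel])
      exact hp.dvd_of_dvd_pow h3
    simp only [Prod.mk.injEq]
    exact ⟨Nat.mul_div_cancel' hpu, Nat.mul_div_cancel' hpv⟩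

lemma nonunit_base (N p : ℕ) (hp : p.Prime) :
    ((range p ×ˢ range p).filter
        (fun z => p ∣ z.1 ^ 2 + N * z.2 ^ 2 ∧ p ∣ z.2)).card = 1 := by
  rw [Finset.card_eq_one]
  refine ⟨(0, 0), ?_⟩
  ext ⟨u, v⟩
  simp only [mem_filter, mem_product, mem_range, Finset.mem_singleton, Prod.mk.injEq]
  constructor
  · rintro ⟨⟨hu, hv⟩, hd, hpv⟩
    have hv0 : v = 0 := Nat.eq_zero_of_dvd_of_lt hpv hv
    subst hv0
    have hpu : p ∣ u := by
      have h1 : p ∣ u ^ 2 := by simpa using hd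
      exact hp.dvd_of_dvd_pow h1
    exact ⟨Nat.eq_zero_of_dvd_of_lt hpu hu, rfl⟩
  · rintro ⟨rfl, rfl⟩
    exact ⟨⟨hp.pos, hp.pos⟩, by simp, dvd_zero p⟩
lemma roots_lift (N p α : ℕ) (hp : p.Prime) (hp2N : ¬ p ∣ 2 * N) (hα : 1 ≤ α) :
    ((range (p ^ (α + 1))).filter (fun x => p ^ (α + 1) ∣ x ^ 2 + N)).card
      = ((range (p ^ α)).filter (fun x => p ^ α ∣ x ^ 2 + N)).card := by
  haveI : Fact p.Prime := ⟨hp⟩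
  have hp2 : ¬ p ∣ 2 := fun h => hp2N (h.mul_right N)
  have hpN : ¬ p ∣ N := fun h => hp2N (h.mul_left 2)
  set m := p ^ α with hm
  have hm0 : 0 < m := pow_pos hp.pos α
  have hqm : p ^ (α + 1) = m * p := pow_succ p α
  have hpm : p ∣ m := dvd_pow_self p (by omega)
  have hpZ : Prime (p : ℤ) := Nat.prime_iff_prime_int.1 hp
  apply Finset.card_bij (i := fun y _ => y % m)
  · -- maps into
    intro y hy
    simp only [mem_filter, mem_range] at hy ⊢
    obtain ⟨hylt, hyd⟩ := hy
    refine ⟨Nat.mod_lt _ hm0, ?_⟩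
    rw [dvd_shift1]
    rw [hqm] at hyd
    exact (dvd_mul_right m p).trans hyd
  · -- injective
    intro y₁ h₁ y₂ h₂ hEq
    simp only [mem_filter, mem_range] at h₁ h₂
    obtain ⟨hy₁, hd₁⟩ := h₁
    obtain ⟨hy₂, hd₂⟩ := h₂
    have hmodm : y₁ ≡ y₂ [MOD m] := hEq
    obtain ⟨d, hdd⟩ := (Nat.modEq_iff_dvd).1 hmodm
    have dq1 : ((m * p : ℕ) : ℤ) ∣ ((y₁ : ℤ) ^ 2 + N) := by
      rw [← hqm]; exact_mod_cast Int.natCast_dvd_natCast.2 hd₁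
    have dq2 : ((m * p : ℕ) : ℤ) ∣ ((y₂ : ℤ) ^ 2 + N) := by
      rw [← hqm]; exact_mod_cast Int.natCast_dvd_natCast.2 hd₂
    have hq' : ((m : ℤ) * p) ∣ ((y₂ : ℤ) ^ 2 - (y₁ : ℤ) ^ 2) := by
      have := dvd_sub dq2 dq1
      push_cast at this ⊢
      convert this using 1
      · rfl
      · ring
    have h5 : (m : ℤ) * p ∣ (m : ℤ) * (d * ((y₂ : ℤ) + y₁)) := by
      have e : (y₂ : ℤ) ^ 2 - (y₁ : ℤ) ^ 2 = (m : ℤ) * (d * ((y₂ : ℤ) + y₁)) := by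
        have : (y₂ : ℤ) ^ 2 - (y₁ : ℤ) ^ 2 = ((y₂ : ℤ) - y₁) * ((y₂ : ℤ) + y₁) := by ring
        rw [this, hdd]; ring
      rw [← e]; exact hq'
    have h6 : (p : ℤ) ∣ d * ((y₂ : ℤ) + y₁) :=
      (mul_dvd_mul_iff_left (show (m : ℤ) ≠ 0 by positivity)).1 h5
    rcases hpZ.dvd_mul.1 h6 with hd' | hsum
    · have hdvd : y₁ ≡ y₂ [MOD m * p] := by
        rw [Nat.modEq_iff_dvd]
        rw [hdd]
        push_cast
        exact mul_dvd_mul_left (m : ℤ) hd'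
      rw [hqm] at hy₁ hy₂
      exact hdvd.eq_of_lt_of_lt hy₁ hy₂
    · exfalso
      have hpmZ : (p : ℤ) ∣ (m : ℤ) := Int.natCast_dvd_natCast.2 hpm
      have h7 : (p : ℤ) ∣ (y₂ : ℤ) - y₁ := by rw [hdd]; exact Dvd.dvd.mul_right hpmZ d
      have h8 : (p : ℤ) ∣ 2 * (y₂ : ℤ) := by
        have e : ((y₂ : ℤ) + y₁) + ((y₂ : ℤ) - y₁) = 2 * y₂ := by ring
        exact e ▸ dvd_add hsum h7
      rcases hpZ.dvd_mul.1 h8 with h2' | hy'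
      · exact hp2 (by exact_mod_cast h2')
      · have hpy : p ∣ y₂ := by exact_mod_cast hy'
        have hdq : p ∣ y₂ ^ 2 + N := (dvd_pow_self p (by omega : α + 1 ≠ 0)).trans hd₂
        have : p ∣ N := by
          have h9 : p ∣ y₂ ^ 2 := hpy.pow (by omega)
          have := Nat.dvd_sub hdq h9
          rwa [Nat.add_sub_cancel_left] at this
        exact hpN this
  · -- surjective
    intro x hx
    simp only [mem_filter, mem_range] at hx
    obtain ⟨hxlt, hxd⟩ := hx
    obtain ⟨c, hc⟩ := hxd
    have hpx : ¬ p ∣ x := by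
      intro h
      apply hpN
      have h1 : p ∣ x ^ 2 + N := hpm.trans ⟨c, hc⟩
      have h2 : p ∣ x ^ 2 := h.pow (by omega)
      have := Nat.dvd_sub h1 h2
      rwa [Nat.add_sub_cancel_left] at this
    set X : ZMod p := ((2 * x : ℕ) : ZMod p) with hX
    have h2x : X ≠ 0 := by
      rw [hX, Ne, ZMod.natCast_eq_zero_iff]
      intro h
      rcases (Nat.Prime.dvd_mul hp).1 h with h' | h'
      · exact hp2 h'
      · exact hpx h'
    set T : ZMod p := -(c : ZMod p) * X⁻¹ with hT
    set t := T.val with ht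
    have htp : t < p := ZMod.val_lt T
    have hkey : p ∣ c + 2 * x * t := by
      have htT : ((t : ℕ) : ZMod p) = T := by rw [ht, ZMod.natCast_val, ZMod.cast_id]
      rw [← ZMod.natCast_eq_zero_iff]
      rw [Nat.cast_add, Nat.cast_mul, htT]
      have hinv : X * X⁻¹ = 1 := mul_inv_cancel₀ h2x
      rw [hT, ← hX]
      linear_combination (-(c : ZMod p)) * hinv
    refine ⟨x + t * m, ?_, ?_⟩
    · simp only [mem_filter, mem_range]
      constructor
      · rw [hqm]
        calc x + t * m < m + t * m := by omega
          _ = m * (t + 1) := by ring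
          _ ≤ m * p := Nat.mul_le_mul_left m (by omega)
      · rw [hqm]
        have e : (x + t * m) ^ 2 + N = m * (c + 2 * x * t + m * t ^ 2) := by
          calc (x + t * m) ^ 2 + N = (x ^ 2 + N) + (2 * x * t + m * t ^ 2) * m := by ring
            _ = m * c + (2 * x * t + m * t ^ 2) * m := by rw [hc]
            _ = m * (c + 2 * x * t + m * t ^ 2) := by ring
        rw [e]
        apply mul_dvd_mul_left m
        exact dvd_add hkey (hpm.mul_right _)
    · rw [Nat.add_mul_mod_self_right, Nat.mod_eq_of_lt hxlt]
lemma roots_stable (N p α : ℕ) (hp : p.Prime) (hp2N : ¬ p ∣ 2 * N) (hα : 1 ≤ α) :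
    ((range (p ^ α)).filter (fun x => p ^ α ∣ x ^ 2 + N)).card = rhoZeroN N p := by
  induction α with
  | zero => omega
  | succ β ih =>
    rcases Nat.eq_zero_or_pos β with rfl | hβ
    · unfold rhoZeroN
      norm_num
    · rw [roots_lift N p β hp hp2N hβ]
      exact ih hβ

lemma nonmult_card (p α : ℕ) (hp : p.Prime) (hα : 1 ≤ α) :
    ((range (p ^ α)).filter (fun v => ¬ p ∣ v)).card = Nat.totient (p ^ α) := by
  have hpow : p ^ α = p * p ^ (α - 1) := by
    conv_lhs => rw [show α = (α - 1) + 1 by omega]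
    rw [pow_succ]; ring
  rw [Nat.totient_prime_pow hp hα, hpow, card_nonmultiples p (p ^ (α - 1)) hp.pos]
  have h1 : p * p ^ (α - 1) = p ^ (α - 1) * p := by ring
  rw [h1, ← Nat.mul_sub_one]

lemma rec_step (N p α : ℕ) (hp : p.Prime) (hp2N : ¬ p ∣ 2 * N) (hα : 1 ≤ α) :
    cntPairs N (p ^ (α + 2))
      = Nat.totient (p ^ (α + 2)) * rhoZeroN N p + cntPairs N (p ^ α) * p ^ 2 := by
  rw [split_lemma N p (α + 2) hp (by omega), roots_stable N p (α + 2) hp hp2N (by omega),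
    nonmult_card p (α + 2) hp (by omega), nonunit_part N p α hp]
  ring

lemma base_one (N p : ℕ) (hp : p.Prime) (hp2N : ¬ p ∣ 2 * N) :
    cntPairs N (p ^ 1) = Nat.totient (p ^ 1) * rhoZeroN N p + 1 := by
  rw [split_lemma N p 1 hp le_rfl, roots_stable N p 1 hp hp2N le_rfl,
    nonmult_card p 1 hp le_rfl]
  have h : ((range (p ^ 1) ×ˢ range (p ^ 1)).filter
      (fun z => p ^ 1 ∣ z.1 ^ 2 + N * z.2 ^ 2 ∧ p ∣ z.2)).card = 1 := by
    simp only [pow_one]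
    exact nonunit_base N p hp
  rw [h]
  ring

lemma base_two (N p : ℕ) (hp : p.Prime) (hp2N : ¬ p ∣ 2 * N) :
    cntPairs N (p ^ 2) = Nat.totient (p ^ 2) * rhoZeroN N p + p ^ 2 := by
  have h0 := nonunit_part N p 0 hp
  norm_num [pow_zero, cntPairs_one] at h0
  rw [split_lemma N p 2 hp (by omega), roots_stable N p 2 hp hp2N (by omega),
    nonmult_card p 2 hp (by omega), h0]
  ring

lemma tot_step (p j : ℕ) (hp : p.Prime) (hj : 1 ≤ j) :
    p ^ 2 * Nat.totient (p ^ j) = Nat.totient (p ^ (j + 2)) := by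
  rw [Nat.totient_prime_pow hp hj, Nat.totient_prime_pow hp (by omega : 0 < j + 2)]
  have : p ^ 2 * p ^ (j - 1) = p ^ (j + 2 - 1) := by
    rw [← pow_add]
    congr 1
    omega
  rw [← mul_assoc, this]

lemma main_closed (N p : ℕ) (hp : p.Prime) (hp2N : ¬ p ∣ 2 * N) : ∀ k : ℕ,
    cntPairs N (p ^ (2 * k + 1))
        = (k + 1) * Nat.totient (p ^ (2 * k + 1)) * rhoZeroN N p + p ^ (2 * k)
    ∧ cntPairs N (p ^ (2 * k + 2))
        = (k + 1) * Nat.totient (p ^ (2 * k + 2)) * rhoZeroN N p + p ^ (2 * k + 2) := by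
  intro k
  induction k with
  | zero =>
    constructor
    · simpa using base_one N p hp hp2N
    · simpa using base_two N p hp hp2N
  | succ k ih
  =>
    obtain ⟨ih1, ih2⟩ := ih
    constructor
    · have e : 2 * (k + 1) + 1 = (2 * k + 1) + 2 := by ring
      rw [e, rec_step N p (2 * k + 1) hp hp2N (by omega), ih1,
        ← tot_step p (2 * k + 1) hp (by omega)]
      have e2 : (2 * k + 1) + 2 = 2 * (k + 1) + 1 := by ring
      rw [show p ^ (2 * (k + 1)) = p ^ (2 * k) * p ^ 2 by rw [show 2 * (k + 1) = 2 * k + 2 by ring, pow_add]]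
      ring
    · have e : 2 * (k + 1) + 2 = (2 * k + 2) + 2 := by ring
      rw [e, rec_step N p (2 * k + 2) hp hp2N (by omega), ih2,
        ← tot_step p (2 * k + 2) hp (by omega)]
      rw [show p ^ (2 * k + 2 + 2) = p ^ (2 * k + 2) * p ^ 2 by rw [← pow_add]]
      ring

/-- For an odd prime `p ∤ 2N` and `α ≥ 1`:
`ρ_N(p^α) = (α/2)·φ(p^α)·ρ_{0,N}(p) + p^α` for even `α`, and
`ρ_N(p^α) = ((α+1)/2)·φ(p^α)·ρ_{0,N}(p) + p^{α−1}` for odd `α`. -/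
theorem stmt_10 (N p α : ℕ) (hN : 0 < N) (hp : p.Prime) (hp2N : ¬ p ∣ 2 * N)
    (hα : 1 ≤ α) :
    (Even α → rhoN N (p ^ α) = (α / 2) * Nat.totient (p ^ α) * rhoZeroN N p + p ^ α) ∧
    (Odd α → rhoN N (p ^ α) = ((α + 1) / 2) * Nat.totient (p ^ α) * rhoZeroN N p
        + p ^ (α - 1)) := by
  constructor
  · intro hpar
    obtain ⟨c, hc⟩ := hpar
    have hc1 : 1 ≤ c := by omega
    have hα2 : α = 2 * (c - 1) + 2 := by omega
    rw [rhoN_eq_cntPairs N (p ^ α) (pow_pos hp.pos α), hα2,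
      (main_closed N p hp hp2N (c - 1)).2]
    have hdiv : (2 * (c - 1) + 2) / 2 = (c - 1) + 1 := by omega
    rw [hdiv]
  · intro hpar
    obtain ⟨c, hc⟩ := hpar
    have hα2 : α = 2 * c + 1 := by omega
    rw [rhoN_eq_cntPairs N (p ^ α) (pow_pos hp.pos α), hα2,
      (main_closed N p hp hp2N c).1]
    have hdiv : (2 * c + 1 + 1) / 2 = c + 1 := by omega
    have hsub : 2 * c + 1 - 1 = 2 * c := by omega
    rw [hdiv, hsub]
end

section
/- (Kusmin–Landau) Let f be a differentiable real-valued function on an interval I such that ‖f'(x)‖ ≥ λ > 0 for all x in I and f' is monotone. Then Σ_{n ∈ I ∩ ℤ} e(f(n)) ≪ λ^{-1}, with an absolute implied constant. -/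
open Real

lemma KL_sin_lb {lam t : ℝ} (h0 : 0 < lam) (h2 : lam ≤ 1/2)
    (h1 : lam ≤ t) (h3 : t ≤ 1 - lam) : 2 * lam ≤ Real.sin (π * t) := by
  have hπ := Real.pi_pos
  rcases le_or_gt t (1/2) with h | h
  · calc 2 * lam ≤ 2 * t := by linarith
    _ = 2/π * (π * t) := by field_simp
    _ ≤ Real.sin (π * t) := Real.mul_le_sin (by nlinarith) (by nlinarith)
  · have he : Real.sin (π * t) = Real.sin (π * (1 - t)) := by
      rw [← Real.sin_pi_sub]; ring_nf
    rw [he]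
    calc 2 * lam ≤ 2 * (1 - t) := by linarith
    _ = 2/π * (π * (1-t)) := by field_simp
    _ ≤ Real.sin (π * (1-t)) := Real.mul_le_sin (by nlinarith) (by nlinarith)

lemma KL_abs_exp_sub_one {t : ℝ} (h0 : 0 ≤ t) (h1 : t ≤ 1) :
    ‖Complex.exp ((2 * π * t : ℝ) * Complex.I) - 1‖ = 2 * Real.sin (π * t) := by
  have hπ := Real.pi_pos
  have hre : (Complex.exp ((2 * π * t : ℝ) * Complex.I) - 1).re = Real.cos (2*π*t) - 1 := by
    simp only [Complex.sub_re, Complex.one_re, Complex.exp_ofReal_mul_I_re]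
  have him : (Complex.exp ((2 * π * t : ℝ) * Complex.I) - 1).im = Real.sin (2*π*t) := by
    simp only [Complex.sub_im, Complex.one_im, Complex.exp_ofReal_mul_I_im, sub_zero]
  have hc : Real.cos (2*π*t) = 1 - 2 * Real.sin (π*t)^2 := by
    rw [show 2*π*t = 2*(π*t) from by ring, Real.cos_two_mul]
    nlinarith [Real.sin_sq_add_cos_sq (π*t)]
  have hs : 0 ≤ Real.sin (π*t) :=
    Real.sin_nonneg_of_nonneg_of_le_pi (by positivity) (by nlinarith)
  rw [Complex.norm_def, Complex.normSq_apply, hre, him]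
  rw [show (Real.cos (2*π*t) - 1) * (Real.cos (2*π*t) - 1) + Real.sin (2*π*t) * Real.sin (2*π*t)
      = (2 * Real.sin (π*t))^2 by nlinarith [Real.sin_sq_add_cos_sq (2*π*t)]]
  exact Real.sqrt_sq (by positivity)

-- re and im of w(t) = (exp(2πtI)-1)⁻¹ for t ∈ (0,1)
lemma KL_w_re_im {t : ℝ} (h0 : 0 < t) (h1 : t < 1) :
    (Complex.exp ((2 * π * t : ℝ) * Complex.I) - 1)⁻¹.re = -(1/2) ∧
    (Complex.exp ((2 * π * t : ℝ) * Complex.I) - 1)⁻¹.im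
      = -Real.cos (π*t) / (2 * Real.sin (π*t)) := by
  have hπ := Real.pi_pos
  have hre : (Complex.exp ((2 * π * t : ℝ) * Complex.I) - 1).re = Real.cos (2*π*t) - 1 := by
    simp only [Complex.sub_re, Complex.one_re, Complex.exp_ofReal_mul_I_re]
  have him : (Complex.exp ((2 * π * t : ℝ) * Complex.I) - 1).im = Real.sin (2*π*t) := by
    simp only [Complex.sub_im, Complex.one_im, Complex.exp_ofReal_mul_I_im, sub_zero]
  have hs : 0 < Real.sin (π*t) := Real.sin_pos_of_pos_of_lt_pi (by positivity) (by nlinarith)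
  have hc : Real.cos (2*π*t) = 1 - 2 * Real.sin (π*t)^2 := by
    rw [show 2*π*t = 2*(π*t) from by ring, Real.cos_two_mul]
    nlinarith [Real.sin_sq_add_cos_sq (π*t)]
  have hs2 : Real.sin (2*π*t) = 2 * Real.sin (π*t) * Real.cos (π*t) := by
    rw [show 2*π*t = 2*(π*t) from by ring, Real.sin_two_mul]
  have hnsq : Complex.normSq (Complex.exp ((2 * π * t : ℝ) * Complex.I) - 1)
      = 4 * Real.sin (π*t)^2 := by
    rw [Complex.normSq_apply, hre, him, hc, hs2]
    nlinarith [Real.sin_sq_add_cos_sq (π*t)]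
  constructor
  · rw [Complex.inv_re, hnsq, hre, hc]; field_simp; ring
  · rw [Complex.inv_im, hnsq, him, hs2]; field_simp; ring

-- monotonicity of Im w
lemma KL_im_mono {s t : ℝ} (h0 : 0 < s) (hst : s ≤ t) (h1 : t < 1) :
    -Real.cos (π*s) / (2 * Real.sin (π*s)) ≤ -Real.cos (π*t) / (2 * Real.sin (π*t)) := by
  have hπ := Real.pi_pos
  have hss : 0 < Real.sin (π*s) := Real.sin_pos_of_pos_of_lt_pi (by positivity) (by nlinarith)
  have hst' : 0 < Real.sin (π*t) :=
    Real.sin_pos_of_pos_of_lt_pi (by nlinarith) (by nlinarith)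
  rw [div_le_div_iff₀ (by positivity) (by positivity)]
  have key : 0 ≤ Real.sin (π*t - π*s) :=
    Real.sin_nonneg_of_nonneg_of_le_pi (by nlinarith) (by nlinarith)
  rw [Real.sin_sub] at key
  nlinarith

-- abs of difference with equal real parts
lemma KL_abs_sub_eq_im {z z' : ℂ} (h : z.re = z'.re) :
    ‖z - z'‖ = |z.im - z'.im| := by
  rw [Complex.norm_def, Complex.normSq_apply, Complex.sub_re, Complex.sub_im, h, sub_self]
  rw [show (0:ℝ) * 0 + (z.im - z'.im) * (z.im - z'.im) = (z.im - z'.im)^2 by ring]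
  exact Real.sqrt_sq_eq_abs _

-- band lemma via Darboux
lemma KL_band {f : ℝ → ℝ} {a b lam : ℝ} (hab : a ≤ b) (hlam : 0 < lam)
    (hd : ∀ x ∈ Set.Icc a b, DifferentiableAt ℝ f x)
    (hne : ∀ x ∈ Set.Icc a b, lam ≤ |deriv f x - round (deriv f x)|) :
    ∃ k : ℤ, ∀ x ∈ Set.Icc a b, (k:ℝ) + lam ≤ deriv f x ∧ deriv f x ≤ (k:ℝ) + 1 - lam := by
  have hint : ∀ x ∈ Set.Icc a b, ∀ m : ℤ, lam ≤ |deriv f x - m| := fun x hx m =>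
    (hne x hx).trans (round_le (deriv f x) m)
  have hoc : Set.OrdConnected (deriv f '' Set.Icc a b) :=
    Set.ordConnected_Icc.image_deriv hd
  have hmema : a ∈ Set.Icc a b := Set.left_mem_Icc.2 hab
  set k : ℤ := ⌊deriv f a⌋ with hk
  have hfa1 : (k:ℝ) + lam ≤ deriv f a := by
    have h1 := hint a hmema k
    have h2 : (k:ℝ) ≤ deriv f a := Int.floor_le _
    rw [abs_of_nonneg (by linarith)] at h1; linarith
  have hfa2 : deriv f a ≤ (k:ℝ) + 1 - lam := by
    have h1 := hint a hmema (k+1)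
    have h2 : deriv f a < (k:ℝ) + 1 := Int.lt_floor_add_one _
    rw [abs_of_nonpos (by push_cast; linarith)] at h1; push_cast at h1 ⊢; linarith
  refine ⟨k, fun x hx => ⟨?_, ?_⟩⟩
  · by_contra h
    push_neg at h
    have hx2 : deriv f x ≤ (k:ℝ) - lam := by
      have h1 := hint x hx k
      rcases abs_cases (deriv f x - k) with ⟨he, _⟩ | ⟨he, _⟩ <;> linarith
    have : (k:ℝ) ∈ deriv f '' Set.Icc a b := by
      apply hoc.out (Set.mem_image_of_mem _ hx) (Set.mem_image_of_mem _ hmema)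
      exact Set.mem_Icc.2 ⟨by linarith, by linarith⟩
    obtain ⟨y, hy, hyk⟩ := this
    have := hint y hy k
    rw [hyk] at this; simp at this; linarith
  · by_contra h
    push_neg at h
    have hx2 : (k:ℝ) + 1 + lam ≤ deriv f x := by
      have h1 := hint x hx (k+1)
      push_cast at h1
      rcases abs_cases (deriv f x - (k+1:ℝ)) with ⟨he, _⟩ | ⟨he, _⟩ <;> linarith
    have : ((k:ℝ) + 1) ∈ deriv f '' Set.Icc a b := by
      apply hoc.out (Set.mem_image_of_mem _ hmema) (Set.mem_image_of_mem _ hx)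
      exact Set.mem_Icc.2 ⟨by linarith, by linarith⟩
    obtain ⟨y, hy, hyk⟩ := this
    have := hint y hy (k+1)
    rw [hyk] at this; push_cast at this
    simp at this; linarith

lemma KL_reindex (g : ℤ → ℂ) (M N : ℤ) (h : M ≤ N) :
    ∑ n ∈ Finset.Icc M N, g n = ∑ i ∈ Finset.range ((N - M).toNat + 1), g (M + i) := by
  apply Finset.sum_nbij' (fun n => (n - M).toNat) (fun i => M + (i:ℤ)) <;>
    simp only [Finset.mem_Icc, Finset.mem_range] <;> intros <;> first | omega | (congr 1; omega)

lemma KL_abs_sub_le (x y : ℂ) : ‖x - y‖ ≤ ‖x‖ + ‖y‖ := by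
  exact norm_sub_le x y

open Complex in
/-- (Kusmin–Landau) There is an absolute constant `C` such that: if `f` is
differentiable on `[a, b]` with monotone derivative and `‖f'(x)‖ ≥ λ > 0` on `[a, b]`
(`‖t‖` the distance of `t` to the nearest integer), then
`|Σ_{a ≤ n ≤ b} e(f(n))| ≤ C / λ`. -/
theorem stmt_13 :
    ∃ C : ℝ, 0 < C ∧
      ∀ (f : ℝ → ℝ) (a b lam : ℝ), a ≤ b → 0 < lam →
        (∀ x ∈ Set.Icc a b, DifferentiableAt ℝ f x) →
        (MonotoneOn (deriv f) (Set.Icc a b) ∨ AntitoneOn (deriv f) (Set.Icc a b)) →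
        (∀ x ∈ Set.Icc a b, lam ≤ |deriv f x - round (deriv f x)|) →
        ‖(∑ n ∈ Finset.Icc ⌈a⌉ ⌊b⌋,
            Complex.exp (2 * Real.pi * I * (f n)))‖ ≤ C / lam := by
  refine ⟨10, by norm_num, ?_⟩
  intro f a b lam hab hlam hd hmono hne
  have hπ := Real.pi_pos
  have hmema : a ∈ Set.Icc a b := Set.left_mem_Icc.2 hab
  have hlam2 : lam ≤ 1/2 := (hne a hmema).trans (abs_sub_round _)
  have hinvlam : 2 ≤ 1/lam := by rw [le_div_iff₀ hlam]; linarith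
  set M : ℤ := ⌈a⌉ with hM
  set N : ℤ := ⌊b⌋ with hN
  by_cases hMN : N < M
  · rw [Finset.Icc_eq_empty (not_le.mpr hMN), Finset.sum_empty]
    simp only [norm_zero]
    positivity
  push_neg at hMN
  have haM : a ≤ (M:ℝ) := Int.le_ceil a
  have hNb : (N:ℝ) ≤ b := Int.floor_le b
  set K : ℕ := (N - M).toNat with hK
  have hKNM : N = M + K := by omega
  set A : ℕ → ℂ := fun i => Complex.exp (2 * Real.pi * Complex.I * (f ((M:ℝ) + i))) with hA
  have habsA : ∀ i, ‖A i‖ = 1 := by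
    intro i
    rw [hA]
    simp only [Complex.norm_exp]
    norm_num [Complex.mul_re, Complex.mul_im]
  -- reindex the sum
  rw [KL_reindex _ _ _ hMN]
  have hsum0 : ∑ i ∈ Finset.range ((N - M).toNat + 1),
      Complex.exp (2 * Real.pi * Complex.I * (f ((M + (i:ℕ) : ℤ) : ℝ)))
      = ∑ i ∈ Finset.range (K+1), A i := by
    apply Finset.sum_congr rfl
    intro i _
    rw [hA]
    norm_num
  rw [hsum0]
  -- membership helpers
  have hmemIcc : ∀ x : ℝ, a ≤ x → x ≤ b → x ∈ Set.Icc a b := fun x h1 h2 => ⟨h1, h2⟩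
  have hMib : ∀ i : ℕ, i ≤ K → (M:ℝ) + i ≤ b := by
    intro i hi
    have : ((M + i : ℤ) : ℝ) ≤ (N:ℝ) := by exact_mod_cast (by omega : M + (i:ℤ) ≤ N)
    push_cast at this
    linarith
  -- band
  obtain ⟨k, hband⟩ := KL_band hab hlam hd hne
  set φ : ℕ → ℝ := fun i => f ((M:ℝ) + i + 1) - f ((M:ℝ) + i) - k with hφdef
  -- MVT
  have hmvt : ∀ i : ℕ, i < K → ∃ c, ((M:ℝ) + i < c ∧ c < (M:ℝ) + i + 1) ∧
      deriv f c = φ i + k := by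
    intro i hi
    have hsub : Set.Icc ((M:ℝ) + i) ((M:ℝ) + i + 1) ⊆ Set.Icc a b := by
      apply Set.Icc_subset_Icc
      · have : (0:ℝ) ≤ i := Nat.cast_nonneg i
        linarith
      · have := hMib (i+1) (by omega)
        push_cast at this
        linarith
    have hcont : ContinuousOn f (Set.Icc ((M:ℝ) + i) ((M:ℝ) + i + 1)) := by
      intro x hx
      exact (hd x (hsub hx)).continuousAt.continuousWithinAt
    have hdiff : DifferentiableOn ℝ f (Set.Ioo ((M:ℝ) + i) ((M:ℝ) + i + 1)) := by
      intro x hx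
      exact (hd x (hsub (Set.Ioo_subset_Icc_self hx))).differentiableWithinAt
    obtain ⟨c, hc, hc'⟩ := exists_deriv_eq_slope f (by linarith : (M:ℝ) + i < (M:ℝ) + i + 1)
      hcont hdiff
    refine ⟨c, ⟨hc.1, hc.2⟩, ?_⟩
    rw [hc']
    rw [hφdef]
    simp only
    field_simp
    ring
  choose c hcb hcder using hmvt
  have hcmem : ∀ i (h : i < K), c i h ∈ Set.Icc a b := by
    intro i h
    refine ⟨?_, ?_⟩
    · have : (0:ℝ) ≤ i := Nat.cast_nonneg i
      have := (hcb i h).1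
      linarith
    · have h2 := (hcb i h).2
      have := hMib (i+1) (by omega)
      push_cast at this
      linarith
  have hφb : ∀ i (h : i < K), lam ≤ φ i ∧ φ i ≤ 1 - lam := by
    intro i h
    have h1 := (hband (c i h) (hcmem i h)).1
    have h2 := (hband (c i h) (hcmem i h)).2
    rw [hcder i h] at h1 h2
    constructor <;> linarith
  -- c is increasing across indices
  have hcmono : ∀ i j (hi : i < K) (hj : j < K), i < j → c i hi < c j hj := by
    intro i j hi hj hij
    have h1 := (hcb i hi).2
    have h2 := (hcb j hj).1
    have : (i:ℝ) + 1 ≤ (j:ℝ) := by exact_mod_cast (by omega : (i:ℤ) + 1 ≤ j)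
    linarith
  set w : ℕ → ℂ := fun i => (Complex.exp ((2 * Real.pi * φ i : ℝ) * Complex.I) - 1)⁻¹ with hw
  -- exp(2πφI) ≠ 1
  have hz : ∀ i (h : i < K), Complex.exp ((2 * Real.pi * φ i : ℝ) * Complex.I) - 1 ≠ 0 := by
    intro i h
    rw [sub_ne_zero]
    intro heq
    obtain ⟨n, hn⟩ := Complex.exp_eq_one_iff.1 heq
    apply_fun Complex.im at hn
    have him : 2 * Real.pi * φ i = (n:ℝ) * (2 * Real.pi) := by
      have h1 : (((2 * Real.pi * φ i : ℝ) : ℂ) * Complex.I).im = 2 * Real.pi * φ i := by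
        simp [Complex.mul_im]
      have h2 : ((n:ℂ) * (2 * (Real.pi:ℂ) * Complex.I)).im = (n:ℝ) * (2 * Real.pi) := by
        simp [Complex.mul_im, Complex.mul_re]
      rw [h1, h2] at hn
      exact hn
    have hb1 := (hφb i h).1
    have hb2 := (hφb i h).2
    have hπl : 0 < 2 * Real.pi := by linarith
    rcases Int.lt_or_le n 1 with hn1 | hn1
    · have hn0 : (n:ℝ) ≤ 0 := by exact_mod_cast (by omega : n ≤ 0)
      have e1 : 2 * Real.pi * lam ≤ 2 * Real.pi * φ i :=
        mul_le_mul_of_nonneg_left hb1 hπl.le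
      have e2 : (n:ℝ) * (2 * Real.pi) ≤ 0 := mul_nonpos_of_nonpos_of_nonneg hn0 hπl.le
      have e3 : 0 < 2 * Real.pi * lam := mul_pos hπl hlam
      linarith
    · have hn0 : (1:ℝ) ≤ (n:ℝ) := by exact_mod_cast hn1
      have e1 : 2 * Real.pi * φ i ≤ 2 * Real.pi * (1 - lam) :=
        mul_le_mul_of_nonneg_left hb2 hπl.le
      have e2 : 1 * (2 * Real.pi) ≤ (n:ℝ) * (2 * Real.pi) :=
        mul_le_mul_of_nonneg_right hn0 hπl.le
      have e3 : 2 * Real.pi * (1 - lam) < 2 * Real.pi * 1 := by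
        apply mul_lt_mul_of_pos_left _ hπl
        linarith
      linarith
  -- key pointwise identity
  have hid : ∀ i : ℕ, A (i+1) = A i * Complex.exp ((2 * Real.pi * φ i : ℝ) * Complex.I) := by
    intro i
    rw [hA]
    simp only
    rw [← Complex.exp_add]
    have hfv : f ((M:ℝ) + (i+1:ℕ)) = φ i + k + f ((M:ℝ) + i) := by
      rw [hφdef]
      push_cast
      ring
    rw [show (2 * (Real.pi:ℂ) * Complex.I * (f ((M:ℝ) + (i+1:ℕ)) : ℝ))
        = (2 * Real.pi * Complex.I * (f ((M:ℝ) + i) : ℝ) + (2 * Real.pi * φ i : ℝ) * Complex.I)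
          + (k:ℂ) * (2 * Real.pi * Complex.I) by
      rw [hfv]; push_cast; ring]
    rw [Complex.exp_add, Complex.exp_int_mul_two_pi_mul_I, mul_one]
  have hAw : ∀ i (h : i < K), A i = (A (i+1) - A i) * w i := by
    intro i h
    have : A (i+1) - A i = A i * (Complex.exp ((2 * Real.pi * φ i : ℝ) * Complex.I) - 1) := by
      rw [hid i]; ring
    rw [this, hw]
    simp only
    rw [mul_assoc, mul_inv_cancel₀ (hz i h), mul_one]
  -- bounds on w
  have habsw : ∀ i (h : i < K), ‖w i‖ ≤ 1/(4*lam) := by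
    intro i h
    have hb1 := (hφb i h).1
    have hb2 := (hφb i h).2
    rw [hw]
    simp only [norm_inv]
    rw [KL_abs_exp_sub_one (by linarith) (by linarith)]
    have hsin := KL_sin_lb hlam hlam2 hb1 hb2
    rw [show (1:ℝ)/(4*lam) = (4*lam)⁻¹ by ring]
    apply inv_anti₀ (by positivity)
    linarith
  have hwre : ∀ i (h : i < K), (w i).re = -(1/2) := by
    intro i h
    have hb1 := (hφb i h).1
    have hb2 := (hφb i h).2
    exact (KL_w_re_im (by linarith) (by linarith)).1
  have hwim : ∀ i (h : i < K), (w i).im = -Real.cos (Real.pi * φ i) / (2 * Real.sin (Real.pi * φ i)) := by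
    intro i h
    have hb1 := (hφb i h).1
    have hb2 := (hφb i h).2
    exact (KL_w_re_im (by linarith) (by linarith)).2
  -- monotonicity of Im w
  have himono : ∀ i j (hi : i < K) (hj : j < K), i ≤ j →
      ((w i).im ≤ (w j).im ∨ (w j).im ≤ (w i).im) ∧
      (MonotoneOn (deriv f) (Set.Icc a b) → (w i).im ≤ (w j).im) ∧
      (AntitoneOn (deriv f) (Set.Icc a b) → (w j).im ≤ (w i).im) := by
    intro i j hi hj hij
    rcases eq_or_lt_of_le hij with rfl | hlt
    · exact ⟨Or.inl le_rfl, fun _ => le_rfl, fun _ => le_rfl⟩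
    have hc1 := hcmem i hi
    have hc2 := hcmem j hj
    have hcc := hcmono i j hi hj hlt
    have hd1 := hcder i hi
    have hd2 := hcder j hj
    have hb1 := hφb i hi
    have hb2 := hφb j hj
    have key1 : MonotoneOn (deriv f) (Set.Icc a b) → φ i ≤ φ j := by
      intro hm
      have := hm hc1 hc2 hcc.le
      rw [hd1, hd2] at this
      linarith
    have key2 : AntitoneOn (deriv f) (Set.Icc a b) → φ j ≤ φ i := by
      intro hm
      have := hm hc1 hc2 hcc.le
      rw [hd1, hd2] at this
      linarith
    have r1 : MonotoneOn (deriv f) (Set.Icc a b) → (w i).im ≤ (w j).im := by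
      intro hm
      rw [hwim i hi, hwim j hj]
      exact KL_im_mono (by linarith [hb1.1]) (key1 hm) (by linarith [hb2.2])
    have r2 : AntitoneOn (deriv f) (Set.Icc a b) → (w j).im ≤ (w i).im := by
      intro hm
      rw [hwim i hi, hwim j hj]
      exact KL_im_mono (by linarith [hb2.1]) (key2 hm) (by linarith [hb1.2])
    refine ⟨?_, r1, r2⟩
    rcases hmono with hm | hm
    · exact Or.inl (r1 hm)
    · exact Or.inr (r2 hm)
  -- case K = 0
  rcases Nat.eq_zero_or_pos K with hK0 | hKpos
  · rw [hK0]
    norm_num [habsA 0]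
    rw [le_div_iff₀ hlam]
    linarith
  -- main case
  have hK1 : K - 1 < K := by omega
  -- Abel summation
  have key : ∑ i ∈ Finset.range (K+1), A i
      = w (K-1) * (A K - A 0)
        - ∑ i ∈ Finset.range (K-1), (w (i+1) - w i) * (A (i+1) - A 0) + A K := by
    rw [Finset.sum_range_succ]
    congr 1
    have step1 : ∑ i ∈ Finset.range K, A i
        = ∑ i ∈ Finset.range K, w i • (A (i+1) - A i) := by
      apply Finset.sum_congr rfl
      intro i hi
      rw [smul_eq_mul, mul_comm]
      exact hAw i (Finset.mem_range.1 hi)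
    rw [step1, Finset.sum_range_by_parts w (fun i => A (i+1) - A i) K]
    rw [Finset.sum_range_sub A K]
    simp only [smul_eq_mul]
    congr 1
    apply Finset.sum_congr rfl
    intro i _
    rw [Finset.sum_range_sub A (i+1)]
  rw [key]
  -- now bound everything
  set W : ℝ := 1/(4*lam) with hW
  have hWpos : 0 < W := by rw [hW]; positivity
  have hterm1 : ‖w (K-1) * (A K - A 0)‖ ≤ W * 2 := by
    rw [norm_mul]
    apply mul_le_mul (habsw (K-1) hK1) ?_ (norm_nonneg _) hWpos.le
    calc ‖A K - A 0‖ ≤ ‖A K‖ + ‖A 0‖ :=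
      KL_abs_sub_le _ _
    _ = 2 := by rw [habsA, habsA]; norm_num
  have hAB2 : ∀ i : ℕ, ‖A (i+1) - A 0‖ ≤ 2 := by
    intro i
    calc ‖A (i+1) - A 0‖ ≤ ‖A (i+1)‖ + ‖A 0‖ :=
      KL_abs_sub_le _ _
    _ = 2 := by rw [habsA, habsA]; norm_num
  have hsumim : ∑ i ∈ Finset.range (K-1), ‖w (i+1) - w i‖ ≤ 2 * W := by
    have hlt : ∀ i ∈ Finset.range (K-1), i + 1 < K ∧ i < K := by
      intro i hi
      have := Finset.mem_range.1 hi
      omega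
    rcases hmono with hm | hm
    · have heach : ∀ i ∈ Finset.range (K-1),
          ‖w (i+1) - w i‖ = (w (i+1)).im - (w i).im := by
        intro i hi
        obtain ⟨h1, h2⟩ := hlt i hi
        rw [KL_abs_sub_eq_im (by rw [hwre _ h1, hwre _ h2])]
        rw [_root_.abs_of_nonneg]
        have := (himono i (i+1) h2 h1 (by omega)).2.1 hm
        linarith
      rw [Finset.sum_congr rfl heach]
      rw [Finset.sum_range_sub (fun i => (w i).im) (K-1)]
      have e1 : (w (K-1)).im ≤ W := by
        calc (w (K-1)).im ≤ |(w (K-1)).im| := le_abs_self _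
        _ ≤ ‖w (K-1)‖ := Complex.abs_im_le_norm _
        _ ≤ W := habsw _ hK1
      have e2 : -W ≤ (w 0).im := by
        calc -W ≤ -‖w 0‖ := by
              have := habsw 0 hKpos
              linarith
        _ ≤ -|(w 0).im| := by
              have := Complex.abs_im_le_norm (w 0)
              linarith
        _ ≤ (w 0).im := neg_abs_le _
      linarith
    · have heach : ∀ i ∈ Finset.range (K-1),
          ‖w (i+1) - w i‖ = (w i).im - (w (i+1)).im := by
        intro i hi
        obtain ⟨h1, h2⟩ := hlt i hi
        rw [KL_abs_sub_eq_im (by rw [hwre _ h1, hwre _ h2])]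
        rw [_root_.abs_of_nonpos]
        · ring
        have := (himono i (i+1) h2 h1 (by omega)).2.2 hm
        linarith
      rw [Finset.sum_congr rfl heach]
      rw [show ∑ i ∈ Finset.range (K-1), ((w i).im - (w (i+1)).im)
          = -∑ i ∈ Finset.range (K-1), ((w (i+1)).im - (w i).im) by
        rw [← Finset.sum_neg_distrib]; apply Finset.sum_congr rfl; intros; ring]
      rw [Finset.sum_range_sub (fun i => (w i).im) (K-1)]
      have e1 : (w 0).im ≤ W := by
        calc (w 0).im ≤ |(w 0).im| := le_abs_self _
        _ ≤ ‖w 0‖ := Complex.abs_im_le_norm _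
        _ ≤ W := habsw _ hKpos
      have e2 : -W ≤ (w (K-1)).im := by
        calc -W ≤ -‖w (K-1)‖ := by
              have := habsw _ hK1
              linarith
        _ ≤ -|(w (K-1)).im| := by
              have := Complex.abs_im_le_norm (w (K-1))
              linarith
        _ ≤ (w (K-1)).im := neg_abs_le _
      linarith
  have hterm2 : ‖∑ i ∈ Finset.range (K-1), (w (i+1) - w i) * (A (i+1) - A 0)‖
      ≤ 2 * (2 * W) := by
    calc ‖∑ i ∈ Finset.range (K-1), (w (i+1) - w i) * (A (i+1) - A 0)‖
        ≤ ∑ i ∈ Finset.range (K-1), ‖(w (i+1) - w i) * (A (i+1) - A 0)‖ :=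
          norm_sum_le _ _
    _ ≤ ∑ i ∈ Finset.range (K-1), ‖w (i+1) - w i‖ * 2 := by
          apply Finset.sum_le_sum
          intro i _
          rw [norm_mul]
          exact mul_le_mul_of_nonneg_left (hAB2 i) (norm_nonneg _)
    _ = 2 * ∑ i ∈ Finset.range (K-1), ‖w (i+1) - w i‖ := by
          rw [Finset.mul_sum]
          apply Finset.sum_congr rfl
          intros
          ring
    _ ≤ 2 * (2 * W) := by
          apply mul_le_mul_of_nonneg_left hsumim (by norm_num)
  calc ‖w (K-1) * (A K - A 0)
        - ∑ i ∈ Finset.range (K-1), (w (i+1) - w i) * (A (i+1) - A 0) + A K‖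
      ≤ ‖w (K-1) * (A K - A 0)
        - ∑ i ∈ Finset.range (K-1), (w (i+1) - w i) * (A (i+1) - A 0)‖ + ‖A K‖ :=
        norm_add_le _ _
    _ ≤ ‖w (K-1) * (A K - A 0)‖
        + ‖∑ i ∈ Finset.range (K-1), (w (i+1) - w i) * (A (i+1) - A 0)‖ + 1 := by
        rw [habsA]
        have := KL_abs_sub_le (w (K-1) * (A K - A 0))
          (∑ i ∈ Finset.range (K-1), (w (i+1) - w i) * (A (i+1) - A 0))
        linarith
    _ ≤ W * 2 + 2 * (2 * W) + 1 := by linarith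
    _ ≤ 10 / lam := by
        rw [hW]
        have e : 1/(4*lam)*2 + 2*(2*(1/(4*lam))) + 1 = (3/2)*(1/lam) + 1 := by
          field_simp
          ring
        rw [e, show (10:ℝ)/lam = 10*(1/lam) by ring]
        linarith
end
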